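/- There exists a constant C > 0 such that for every integer k ≥ 16 that is coprime to 6, the number of pairs of positive integers (x, y) satisfying x² + 3y² = k is at most k^(C / log log k). -/

import Mathlib

open Finset


lemma roots_pm {p n : ℕ} (hp : p.Prime) (hp2 : p ≠ 2) (hp3 : p ≠ 3)
    {s t : ZMod (p^n)} (hs : s^2 = -3) (ht : t^2 = -3) : s = t ∨ s = -t := by
  rcases Nat.eq_zero_or_pos n with rfl | hn
  · left
    have : Subsingleton (ZMod (p^0)) := by rw [pow_zero]; infer_instance
    exact Subsingleton.elim s t
  obtain ⟨a, rfl⟩ := ZMod.intCast_surjective s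
  obtain ⟨b, rfl⟩ := ZMod.intCast_surjective t
  have hpz : Prime (p : ℤ) := Nat.prime_iff_prime_int.mp hp
  have key : ∀ c : ℤ, ((c : ZMod (p^n))^2 = -3) → ¬ (p:ℤ) ∣ c := by
    intro c hc hdvd
    have h1 : ((p:ℤ)^n) ∣ c^2 + 3 := by
      have : ((c^2 + 3 : ℤ) : ZMod (p^n)) = 0 := by push_cast [hc]; ring
      rwa [ZMod.intCast_zmod_eq_zero_iff_dvd, Int.natCast_pow] at this
    have h2 : (p:ℤ) ∣ c^2 + 3 := dvd_trans (dvd_pow_self _ hn.ne') h1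
    have h3 : (p:ℤ) ∣ 3 := (dvd_add_right (dvd_pow hdvd two_ne_zero)).mp h2
    have h3n : p ∣ 3 := by exact_mod_cast h3
    exact hp3 ((Nat.prime_dvd_prime_iff_eq hp (by norm_num)).mp h3n)
  have hprod : ((p:ℤ)^n) ∣ (a - b) * (a + b) := by
    have : (((a-b)*(a+b) : ℤ) : ZMod (p^n)) = 0 := by
      push_cast
      have : (a : ZMod (p^n))^2 = (b : ZMod (p^n))^2 := by rw [hs, ht]
      linear_combination this
    rwa [ZMod.intCast_zmod_eq_zero_iff_dvd, Int.natCast_pow] at this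
  have hnot : ¬ ((p:ℤ) ∣ (a - b) ∧ (p:ℤ) ∣ (a + b)) := by
    rintro ⟨h1, h2⟩
    have h2a : (p:ℤ) ∣ 2*a := by have := dvd_add h1 h2; rwa [show a - b + (a + b) = 2*a by ring] at this
    have hpa : (p:ℤ) ∣ a := by
      rcases hpz.dvd_mul.mp h2a with h | h
      · exfalso
        have h2n : p ∣ 2 := by exact_mod_cast h
        exact hp2 ((Nat.prime_dvd_prime_iff_eq hp (by norm_num)).mp h2n)
      · exact h
    exact key a hs hpa
  rcases em ((p:ℤ) ∣ (a + b)) with h | h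
  · right
    have hnd : ¬ (p:ℤ) ∣ (a - b) := fun h' => hnot ⟨h', h⟩
    have hcop : IsCoprime ((p:ℤ)^n) (a - b) :=
      (IsCoprime.pow_left ((hpz.coprime_iff_not_dvd).mpr hnd))
    have hd : ((p:ℤ)^n) ∣ (a + b) := hcop.dvd_of_dvd_mul_left hprod
    have h0 : ((a + b : ℤ) : ZMod (p^n)) = 0 := by
      rw [ZMod.intCast_zmod_eq_zero_iff_dvd]; exact_mod_cast hd
    push_cast at h0
    linear_combination h0
  · left
    have hcop : IsCoprime ((p:ℤ)^n) (a + b) :=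
      (IsCoprime.pow_left ((hpz.coprime_iff_not_dvd).mpr h))
    have hd : ((p:ℤ)^n) ∣ (a - b) := hcop.dvd_of_dvd_mul_right hprod
    have h0 : ((a - b : ℤ) : ZMod (p^n)) = 0 := by
      rw [ZMod.intCast_zmod_eq_zero_iff_dvd]; exact_mod_cast hd
    push_cast at h0
    linear_combination h0



lemma roots_card_prime_pow {p n : ℕ} (hp : p.Prime) (hp2 : p ≠ 2) (hp3 : p ≠ 3) :
    Nat.card {t : ZMod (p^n) // t^2 = -3} ≤ 2 := by
  have h : Nat.card {t : ZMod (p^n) // t^2 = -3} = ({t : ZMod (p^n) | t^2 = -3}).ncard :=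
    Nat.card_coe_set_eq _
  rw [h]
  rcases Set.eq_empty_or_nonempty {t : ZMod (p^n) | t^2 = -3} with he | ⟨t₀, ht₀⟩
  · simp [he]
  · have hsub : {t : ZMod (p^n) | t^2 = -3} ⊆ {t₀, -t₀} := by
      intro s hs
      rcases roots_pm hp hp2 hp3 hs ht₀ with h | h <;> simp [h]
    calc ({t : ZMod (p^n) | t^2 = -3}).ncard ≤ ({t₀, -t₀} : Set (ZMod (p^n))).ncard :=
          Set.ncard_le_ncard hsub (Set.toFinite _)
      _ ≤ 2 := by
          apply le_trans (Set.ncard_insert_le _ _)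
          simp

lemma roots_card_mul {m n : ℕ} (h : m.Coprime n) :
    Nat.card {t : ZMod (m*n) // t^2 = -3}
      = Nat.card {t : ZMod m // t^2 = -3} * Nat.card {t : ZMod n // t^2 = -3} := by
  have c := ZMod.chineseRemainder h
  have hneg : c (-3) = -3 := by rw [map_neg, map_ofNat]
  have e1 : {t : ZMod (m*n) // t^2 = -3} ≃ {x : ZMod m × ZMod n // x^2 = -3} :=
    Equiv.subtypeEquiv c.toEquiv (by
      intro t
      show t^2 = -3 ↔ (c t)^2 = -3
      rw [← map_pow, ← hneg, c.injective.eq_iff])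
  have e2 : {x : ZMod m × ZMod n // x^2 = -3} ≃ {a : ZMod m // a^2 = -3} × {b : ZMod n // b^2 = -3} := by
    refine (Equiv.subtypeEquiv (Equiv.refl _) ?_).trans (Equiv.subtypeProdEquivProd)
    intro x
    show x^2 = -3 ↔ _
    rw [Prod.ext_iff]
    simp
  rw [Nat.card_congr (e1.trans e2), Nat.card_prod]

lemma roots_card (m : ℕ) (hm : m.Coprime 6) :
    Nat.card {t : ZMod m // t^2 = -3} ≤ 2 ^ m.primeFactors.card := by
  induction m using Nat.recOnPosPrimePosCoprime with
  | prime_pow p n hp hn =>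
    have hp6 : Nat.Coprime p 6 := Nat.Coprime.coprime_dvd_left (dvd_pow_self p hn.ne') hm
    have hp2 : p ≠ 2 := by rintro rfl; norm_num [Nat.Coprime] at hp6
    have hp3 : p ≠ 3 := by rintro rfl; norm_num [Nat.Coprime] at hp6
    rw [Nat.primeFactors_prime_pow hn.ne' hp, Finset.card_singleton, pow_one]
    exact roots_card_prime_pow hp hp2 hp3
  | zero => simp [Nat.coprime_zero_left] at hm
  | one =>
    simp only [Nat.primeFactors_one, Finset.card_empty, pow_zero]
    calc Nat.card {t : ZMod 1 // t^2 = -3} ≤ Nat.card (ZMod 1) := Nat.card_le_card_of_injective Subtype.val Subtype.val_injective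
      _ = 1 := by rw [Nat.card_eq_fintype_card, ZMod.card]
  | coprime a b ha hb hab iha ihb =>
    have ha6 : a.Coprime 6 := Nat.Coprime.coprime_dvd_left (dvd_mul_right a b) hm
    have hb6 : b.Coprime 6 := Nat.Coprime.coprime_dvd_left (dvd_mul_left b a) hm
    rw [roots_card_mul hab, hab.primeFactors_mul,
      Finset.card_union_of_disjoint hab.disjoint_primeFactors, pow_add]
    exact Nat.mul_le_mul (iha ha6) (ihb hb6)



def SF (k : ℕ) : Finset (ℕ × ℕ) :=
  ((range (k+1)) ×ˢ (range (k+1))).filter (fun p => 0 < p.1 ∧ 0 < p.2 ∧ p.1^2 + 3*p.2^2 = k)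

def SPF (k : ℕ) : Finset (ℕ × ℕ) :=
  ((range (k+1)) ×ˢ (range (k+1))).filter
    (fun p => 0 < p.1 ∧ 0 < p.2 ∧ Nat.gcd p.1 p.2 = 1 ∧ p.1^2 + 3*p.2^2 = k)

lemma mem_SF {k : ℕ} {p : ℕ × ℕ} :
    p ∈ SF k ↔ 0 < p.1 ∧ 0 < p.2 ∧ p.1^2 + 3*p.2^2 = k := by
  unfold SF
  simp only [mem_filter, mem_product, mem_range]
  constructor
  · tauto
  · rintro ⟨h1, h2, h3⟩
    refine ⟨⟨?_, ?_⟩, h1, h2, h3⟩ <;> nlinarith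

lemma mem_SPF {k : ℕ} {p : ℕ × ℕ} :
    p ∈ SPF k ↔ 0 < p.1 ∧ 0 < p.2 ∧ Nat.gcd p.1 p.2 = 1 ∧ p.1^2 + 3*p.2^2 = k := by
  unfold SPF
  simp only [mem_filter, mem_product, mem_range]
  constructor
  · tauto
  · rintro ⟨h1, h2, h3, h4⟩
    refine ⟨⟨?_, ?_⟩, h1, h2, h3, h4⟩ <;> nlinarith

lemma SPF_card_le (m : ℕ) (hm : 0 < m) :
    (SPF m).card ≤ Nat.card {t : ZMod m // t^2 = -3} := by
  haveI : NeZero m := ⟨hm.ne'⟩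
  classical
  have hcop : ∀ {x y : ℕ}, 0 < x → Nat.gcd x y = 1 → x^2 + 3*y^2 = m → Nat.Coprime y m := by
    intro x y hx hg he
    by_contra hc
    obtain ⟨q, hq, hqd⟩ := Nat.exists_prime_and_dvd hc
    have hqy : q ∣ y := hqd.trans (Nat.gcd_dvd_left _ _)
    have hqm : q ∣ m := hqd.trans (Nat.gcd_dvd_right _ _)
    have hqx2 : q ∣ x^2 := by
      have hx2 : x^2 = m - 3*y^2 := by omega
      rw [hx2]
      exact Nat.dvd_sub hqm (Dvd.dvd.mul_left (hqy.pow two_ne_zero) 3)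
    have hqx : q ∣ x := hq.dvd_of_dvd_pow hqx2
    have : q ∣ 1 := hg ▸ Nat.dvd_gcd hqx hqy
    simp [Nat.dvd_one] at this
    exact hq.one_lt.ne' this
  have hkey : Nat.card {t : ZMod m // t^2 = -3} = ({t : ZMod m | t^2 = -3}).ncard :=
    Nat.card_coe_set_eq _
  rw [hkey, ← Set.ncard_coe_finset]
  apply Set.ncard_le_ncard_of_injOn (fun p => (p.1 : ZMod m) * (p.2 : ZMod m)⁻¹)
  · rintro ⟨x, y⟩ hp
    simp only [Finset.mem_coe, mem_SPF] at hp
    obtain ⟨hx, hy, hg, he⟩ := hp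
    have hu : IsUnit (y : ZMod m) := (ZMod.isUnit_iff_coprime y m).mpr (hcop hx hg he)
    have hyy : (y : ZMod m) * (y : ZMod m)⁻¹ = 1 := ZMod.mul_inv_of_unit _ hu
    have hxy : (x : ZMod m)^2 = -3 * (y : ZMod m)^2 := by
      have h0 : ((x^2 + 3*y^2 : ℕ) : ZMod m) = 0 := by rw [he, ZMod.natCast_self]
      push_cast at h0
      linear_combination h0
    show ((x : ZMod m) * (y : ZMod m)⁻¹)^2 = -3
    calc ((x : ZMod m) * (y : ZMod m)⁻¹)^2 = (x:ZMod m)^2 * ((y:ZMod m)⁻¹)^2 := by ring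
      _ = -3 * ((y:ZMod m) * (y:ZMod m)⁻¹)^2 := by rw [hxy]; ring
      _ = -3 := by rw [hyy]; ring
  · rintro ⟨x₁, y₁⟩ hp1 ⟨x₂, y₂⟩ hp2 heq
    simp only [Finset.mem_coe, mem_SPF] at hp1 hp2
    obtain ⟨hx1, hy1, hg1, he1⟩ := hp1
    obtain ⟨hx2, hy2, hg2, he2⟩ := hp2
    have hu1 : IsUnit (y₁ : ZMod m) := (ZMod.isUnit_iff_coprime y₁ m).mpr (hcop hx1 hg1 he1)
    have hu2 : IsUnit (y₂ : ZMod m) := (ZMod.isUnit_iff_coprime y₂ m).mpr (hcop hx2 hg2 he2)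
    have hyy1 : (y₁ : ZMod m) * (y₁ : ZMod m)⁻¹ = 1 := ZMod.mul_inv_of_unit _ hu1
    have hyy2 : (y₂ : ZMod m) * (y₂ : ZMod m)⁻¹ = 1 := ZMod.mul_inv_of_unit _ hu2
    simp only at heq
    have h1 : (x₁ : ZMod m) * y₂ * ((y₁:ZMod m) * (y₁:ZMod m)⁻¹)
        = (x₂ : ZMod m) * y₁ * ((y₂:ZMod m) * (y₂:ZMod m)⁻¹) := by
      linear_combination ((y₁ : ZMod m) * (y₂ : ZMod m)) * heq
    rw [hyy1, hyy2, mul_one, mul_one] at h1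
    have h2 : x₁ * y₂ ≡ x₂ * y₁ [MOD m] := by
      rw [← ZMod.natCast_eq_natCast_iff]
      push_cast
      exact h1
    have hb1 : x₁ * y₂ < m := by nlinarith [he1, he2]
    have hb2 : x₂ * y₁ < m := by nlinarith [he1, he2]
    have h3 : x₁ * y₂ = x₂ * y₁ := h2.eq_of_lt_of_lt hb1 hb2
    have hd1 : x₁ ∣ x₂ := (Nat.Coprime.dvd_of_dvd_mul_right hg1 (h3 ▸ Dvd.intro y₂ rfl))
    have hd2 : x₂ ∣ x₁ := (Nat.Coprime.dvd_of_dvd_mul_right hg2 (h3.symm ▸ Dvd.intro y₁ rfl))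
    have hx : x₁ = x₂ := Nat.dvd_antisymm hd1 hd2
    have hyeq : y₂ = y₁ := by
      subst hx
      exact Nat.eq_of_mul_eq_mul_left hx1 h3
    simp [hx, hyeq]

lemma two_pow_omega_le (k : ℕ) (hk : k ≠ 0) :
    2 ^ k.primeFactors.card ≤ k.divisors.card := by
  rw [Nat.card_divisors hk]
  calc 2 ^ k.primeFactors.card = ∏ _p ∈ k.primeFactors, 2 := by rw [Finset.prod_const]
    _ ≤ _ := by
        apply Finset.prod_le_prod'
        intro p hp
        have := Nat.Prime.factorization_pos_of_dvd (Nat.prime_of_mem_primeFactors hp) hk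
          (Nat.dvd_of_mem_primeFactors hp)
        omega

lemma SF_card_le (k : ℕ) (hk : 0 < k) (hk6 : k.Coprime 6) :
    (SF k).card ≤ k.divisors.card * 2 ^ k.primeFactors.card := by
  classical
  set D := k.divisors.filter (fun g => g^2 ∣ k) with hD
  have step1 : (SF k).card ≤ (D.sigma (fun g => SPF (k / g^2))).card := by
    apply Finset.card_le_card_of_injOn
      (fun p => ⟨Nat.gcd p.1 p.2, (p.1 / Nat.gcd p.1 p.2, p.2 / Nat.gcd p.1 p.2)⟩)
    · rintro ⟨x, y⟩ hp
      rw [Finset.mem_coe, mem_SF] at hp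
      obtain ⟨hx, hy, he⟩ := hp
      set g := Nat.gcd x y with hgdef
      have hg : 0 < g := Nat.gcd_pos_of_pos_left _ hx
      have hgx : g ∣ x := Nat.gcd_dvd_left _ _
      have hgy : g ∣ y := Nat.gcd_dvd_right _ _
      obtain ⟨a, ha⟩ := hgx
      obtain ⟨b, hb⟩ := hgy
      have hk2 : k = g^2 * (a^2 + 3*b^2) := by rw [← he, ha, hb]; ring
      have hg2 : g^2 ∣ k := ⟨_, hk2⟩
      have hdivq : k / g^2 = a^2 + 3*b^2 := by
        rw [hk2]
        exact Nat.mul_div_cancel_left _ (by positivity)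
      have hapos : 0 < a := by
        rcases Nat.eq_zero_or_pos a with rfl | h
        · simp at ha; omega
        · exact h
      have hbpos : 0 < b := by
        rcases Nat.eq_zero_or_pos b with rfl | h
        · simp at hb; omega
        · exact h
      have hab : Nat.gcd a b = 1 := by
        have h5 : g * Nat.gcd a b = g * 1 := by
          rw [← Nat.gcd_mul_left, ← ha, ← hb, mul_one, hgdef]
        exact Nat.eq_of_mul_eq_mul_left hg h5
      rw [Finset.mem_coe, Finset.mem_sigma]
      constructor
      · rw [hD, Finset.mem_filter, Nat.mem_divisors]
        exact ⟨⟨(dvd_pow_self g two_ne_zero).trans hg2, hk.ne'⟩, hg2⟩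
      · rw [mem_SPF]
        have hxa : x / g = a := by rw [ha, Nat.mul_div_cancel_left _ hg]
        have hyb : y / g = b := by rw [hb, Nat.mul_div_cancel_left _ hg]
        simp only [← hgdef, hxa, hyb]
        exact ⟨hapos, hbpos, hab, hdivq.symm⟩
    · rintro ⟨x₁, y₁⟩ hp1 ⟨x₂, y₂⟩ hp2 heq
      simp only [Sigma.mk.inj_iff] at heq
      obtain ⟨hfst, hsnd⟩ := heq
      rw [← hfst] at hsnd
      have hsnd' := eq_of_heq hsnd
      simp only [Prod.mk.injEq] at hsnd'
      have hgx1 : Nat.gcd x₁ y₁ ∣ x₁ := Nat.gcd_dvd_left _ _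
      have hgy1 : Nat.gcd x₁ y₁ ∣ y₁ := Nat.gcd_dvd_right _ _
      have hgx2 : Nat.gcd x₂ y₂ ∣ x₂ := Nat.gcd_dvd_left _ _
      have hgy2 : Nat.gcd x₂ y₂ ∣ y₂ := Nat.gcd_dvd_right _ _
      have hx : x₁ = x₂ := by
        have := hsnd'.1
        rw [← Nat.div_mul_cancel hgx1, ← Nat.div_mul_cancel hgx2, this, hfst]
      have hy : y₁ = y₂ := by
        have := hsnd'.2
        rw [← Nat.div_mul_cancel hgy1, ← Nat.div_mul_cancel hgy2, this, hfst]
      simp [hx, hy]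
  refine step1.trans ?_
  rw [Finset.card_sigma]
  have step2 : ∀ g ∈ D, (SPF (k / g^2)).card ≤ 2 ^ k.primeFactors.card := by
    intro g hg
    rw [hD, Finset.mem_filter, Nat.mem_divisors] at hg
    obtain ⟨⟨hgk, _⟩, hg2⟩ := hg
    have hmdvd : k / g^2 ∣ k := ⟨g^2, (Nat.div_mul_cancel hg2).symm⟩
    have hgpos : 0 < g := Nat.pos_of_dvd_of_pos hgk hk
    have hmpos : 0 < k / g^2 := Nat.div_pos (Nat.le_of_dvd hk hg2) (by positivity)
    have hm6 : (k / g^2).Coprime 6 := Nat.Coprime.coprime_dvd_left hmdvd hk6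
    calc (SPF (k / g^2)).card ≤ Nat.card {t : ZMod (k/g^2) // t^2 = -3} :=
          SPF_card_le _ hmpos
      _ ≤ 2 ^ (k/g^2).primeFactors.card := roots_card _ hm6
      _ ≤ 2 ^ k.primeFactors.card := by
          apply Nat.pow_le_pow_right (by norm_num)
          exact Finset.card_le_card (Nat.primeFactors_mono hmdvd hk.ne')
  calc ∑ g ∈ D, (SPF (k / g^2)).card ≤ ∑ _g ∈ D, 2 ^ k.primeFactors.card :=
        Finset.sum_le_sum step2
    _ = D.card * 2 ^ k.primeFactors.card := by rw [Finset.sum_const, smul_eq_mul]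
    _ ≤ k.divisors.card * 2 ^ k.primeFactors.card := by
        apply Nat.mul_le_mul_right
        exact Finset.card_le_card (Finset.filter_subset _ _)


set_option maxHeartbeats 2000000 in
lemma divisor_bound (k : ℕ) (hk : 16 ≤ k) :
    (k.divisors.card : ℝ) ≤ (k:ℝ) ^ ((50:ℝ) / Real.log (Real.log k)) := by
  classical
  have hk0 : 0 < k := by omega
  have hk0R : (0:ℝ) < k := by exact_mod_cast hk0
  set L : ℝ := Real.log k with hLdef
  set LL : ℝ := Real.log L with hLLdef
  have hlog2 : 0.6931471803 < Real.log 2 := Real.log_two_gt_d9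
  have hlog2' : Real.log 2 < 1 := by
    have := Real.log_two_lt_d9
    linarith
  have hL : 2.77 ≤ L := by
    have h16 : Real.log 16 ≤ L := Real.log_le_log (by norm_num) (by exact_mod_cast hk)
    have : Real.log 16 = 4 * Real.log 2 := by
      rw [show (16:ℝ) = 2^4 by norm_num, Real.log_pow]
      norm_num
    linarith
  have hLpos : 0 < L := by linarith
  have hLL : 1 < LL := by
    rw [hLLdef]
    rw [show (1:ℝ) = Real.log (Real.exp 1) by rw [Real.log_exp]]
    apply Real.log_lt_log (Real.exp_pos 1)
    have := Real.exp_one_lt_d9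
    linarith
  have hLLpos : 0 < LL := by linarith
  have hsqnn : 0 ≤ Real.sqrt L := Real.sqrt_nonneg L
  have hsq2 : Real.sqrt L * Real.sqrt L = L := Real.mul_self_sqrt hLpos.le
  -- notation
  set P := k.primeFactors with hP
  set a : ℕ → ℕ := fun p => k.factorization p with ha
  have hcard : (k.divisors.card : ℝ) = ∏ p ∈ P, ((a p : ℝ) + 1) := by
    rw [Nat.card_divisors hk0.ne']
    push_cast
    rfl
  -- split
  set Ps := P.filter (fun p : ℕ => (p:ℝ) ≤ Real.sqrt L) with hPs
  set Pb := P.filter (fun p : ℕ => ¬ (p:ℝ) ≤ Real.sqrt L) with hPb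
  have hsplit : ∏ p ∈ P, ((a p : ℝ) + 1) = (∏ p ∈ Ps, ((a p : ℝ) + 1)) * ∏ p ∈ Pb, ((a p : ℝ) + 1) :=
    (Finset.prod_filter_mul_prod_filter_not P _ _).symm
  -- each exponent bound
  have hexp : ∀ p ∈ P, ((a p : ℝ)) * Real.log 2 ≤ L := by
    intro p hp
    have hp2 : 2 ≤ p := (Nat.prime_of_mem_primeFactors hp).two_le
    have hdvd : p ^ a p ∣ k := Nat.ordProj_dvd k p
    have hle : (2:ℕ) ^ a p ≤ k :=
      le_trans (Nat.pow_le_pow_left hp2 _) (Nat.le_of_dvd hk0 hdvd)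
    have : Real.log ((2:ℝ) ^ a p) ≤ L := by
      apply Real.log_le_log (by positivity)
      exact_mod_cast hle
    rwa [Real.log_pow] at this
  -- SMALL PART
  have hsmall_each : ∀ p ∈ Ps, ((a p : ℝ) + 1) ≤ 2 * L := by
    intro p hp
    have hp' : p ∈ P := Finset.mem_of_mem_filter p hp
    have h1 := hexp p hp'
    have h2 : ((a p : ℝ)) * 0.6931471803 ≤ L := by
      nlinarith [Nat.cast_nonneg (α := ℝ) (a p)]
    nlinarith
  have hsmall1 : ∏ p ∈ Ps, ((a p : ℝ) + 1) ≤ (2*L) ^ Ps.card := by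
    calc ∏ p ∈ Ps, ((a p : ℝ) + 1) ≤ ∏ _p ∈ Ps, (2*L) :=
          Finset.prod_le_prod (fun i _ => by positivity) hsmall_each
      _ = (2*L) ^ Ps.card := Finset.prod_const _
  have hcards : (Ps.card : ℝ) ≤ Real.sqrt L := by
    have hsub : Ps ⊆ Finset.Icc 2 ⌊Real.sqrt L⌋₊ := by
      intro p hp
      rw [hPs, Finset.mem_filter] at hp
      obtain ⟨hp1, hp2⟩ := hp
      rw [Finset.mem_Icc]
      exact ⟨(Nat.prime_of_mem_primeFactors hp1).two_le, Nat.le_floor hp2⟩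
    have h1 : Ps.card ≤ ⌊Real.sqrt L⌋₊ := by
      have := Finset.card_le_card hsub
      rw [Nat.card_Icc] at this
      omega
    calc (Ps.card : ℝ) ≤ (⌊Real.sqrt L⌋₊ : ℝ) := by exact_mod_cast h1
      _ ≤ Real.sqrt L := Nat.floor_le hsqnn
  have hsmall2 : ((2*L) : ℝ) ^ Ps.card ≤ (2*L) ^ (Real.sqrt L) := by
    rw [← Real.rpow_natCast (2*L) Ps.card]
    exact Real.rpow_le_rpow_of_exponent_le (by linarith) hcards
  have hLL4 : LL ≤ 4 * L ^ ((1:ℝ)/4) := by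
    have h1 : Real.log (L ^ ((1:ℝ)/4)) = (1/4) * LL := Real.log_rpow hLpos _
    have h2 : Real.log (L ^ ((1:ℝ)/4)) ≤ L ^ ((1:ℝ)/4) - 1 :=
      Real.log_le_sub_one_of_pos (by positivity)
    nlinarith [Real.rpow_natCast L 0]
  have h14 : (L ^ ((1:ℝ)/4))^2 = Real.sqrt L := by
    rw [Real.sqrt_eq_rpow, ← Real.rpow_natCast (L ^ ((1:ℝ)/4)) 2, ← Real.rpow_mul hLpos.le]
    norm_num
  have hLL2 : LL^2 ≤ 16 * Real.sqrt L := by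
    rw [← h14]
    nlinarith [Real.rpow_nonneg hLpos.le ((1:ℝ)/4), hLL4, hLLpos]
  have hsmall3 : (2*L) ^ (Real.sqrt L) ≤ (k:ℝ) ^ ((32:ℝ)/LL) := by
    rw [Real.rpow_def_of_pos (by linarith), Real.rpow_def_of_pos hk0R]
    apply Real.exp_le_exp.mpr
    have hlog2L : Real.log (2*L) = Real.log 2 + LL := by
      rw [Real.log_mul (by norm_num) hLpos.ne']
    rw [hlog2L]
    rw [← hLdef]
    rw [div_eq_mul_inv, ← mul_assoc]
    have key : (Real.log 2 + LL) * Real.sqrt L * LL ≤ 32 * L := by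
      have e1 : Real.log 2 * (Real.sqrt L * LL) ≤ LL * (Real.sqrt L * LL) :=
        mul_le_mul_of_nonneg_right (by linarith) (mul_nonneg hsqnn hLLpos.le)
      have e2 : LL^2 * Real.sqrt L ≤ (16 * Real.sqrt L) * Real.sqrt L :=
        mul_le_mul_of_nonneg_right hLL2 hsqnn
      nlinarith [hsq2, e1, e2]
    calc (Real.log 2 + LL) * Real.sqrt L ≤ (32*L) / LL := by
          rw [le_div_iff₀ hLLpos]; exact key
      _ = L * 32 * LL⁻¹ := by rw [div_eq_mul_inv]; ring
  -- BIG PART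
  have hbig_nat : (∏ p ∈ Pb, (a p + 1)) ≤ 2 ^ (∑ p ∈ Pb, a p) := by
    rw [← Finset.prod_pow_eq_pow_sum]
    apply Finset.prod_le_prod'
    intro p _
    exact Nat.lt_two_pow_self
  set M := ∑ p ∈ Pb, a p with hM
  clear_value M
  have hprodk : ∏ p ∈ P, p ^ a p = k := Nat.factorization_prod_pow_eq_self hk0.ne'
  have hNle : (∏ p ∈ Pb, p ^ a p) ≤ k := by
    apply Nat.le_of_dvd hk0
    have h1 : (∏ p ∈ Pb, p ^ a p) ∣ ∏ p ∈ P, p ^ a p :=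
      Finset.prod_dvd_prod_of_subset _ _ _ (Finset.filter_subset _ _)
    rwa [hprodk] at h1
  have hlogN : ∑ p ∈ Pb, (a p : ℝ) * Real.log p ≤ L := by
    have hpos : (0:ℝ) < ∏ p ∈ Pb, ((p:ℝ)) ^ a p := by
      apply Finset.prod_pos
      intro p hp
      have := (Nat.prime_of_mem_primeFactors (Finset.mem_of_mem_filter p hp)).two_le
      positivity
    have h2 : Real.log (∏ p ∈ Pb, ((p:ℝ)) ^ a p) ≤ L := by
      apply Real.log_le_log hpos
      exact_mod_cast hNle
    rw [Real.log_prod] at h2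
    · simpa only [Real.log_pow] using h2
    · intro p hp
      have := (Nat.prime_of_mem_primeFactors (Finset.mem_of_mem_filter p hp)).two_le
      positivity
  have hMb : (M:ℝ) * (LL/2) ≤ L := by
    have hterm : ∀ p ∈ Pb, (a p : ℝ) * (LL/2) ≤ (a p : ℝ) * Real.log p := by
      intro p hp
      rw [hPb, Finset.mem_filter] at hp
      have hgt : Real.sqrt L < (p:ℝ) := lt_of_not_ge hp.2
      have hlogp : LL/2 ≤ Real.log p := by
        have hs : Real.log (Real.sqrt L) = LL / 2 := by
          rw [Real.log_sqrt hLpos.le]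
        rw [← hs]
        exact Real.log_le_log (Real.sqrt_pos.mpr hLpos) hgt.le
      exact mul_le_mul_of_nonneg_left hlogp (Nat.cast_nonneg _)
    have hcastM : (M:ℝ) = ∑ p ∈ Pb, (a p : ℝ) := by rw [hM]; exact Nat.cast_sum _ _
    calc (M:ℝ) * (LL/2) = ∑ p ∈ Pb, (a p : ℝ) * (LL/2) := by
          rw [hcastM, Finset.sum_mul]
      _ ≤ ∑ p ∈ Pb, (a p : ℝ) * Real.log p := Finset.sum_le_sum hterm
      _ ≤ L := hlogN
  have hMle : (M:ℝ) ≤ 2*L/LL := by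
    rw [le_div_iff₀ hLLpos]
    nlinarith [hMb]
  have hbig : (∏ p ∈ Pb, ((a p : ℝ) + 1)) ≤ (k:ℝ) ^ ((18:ℝ)/LL) := by
    have hc1 : (∏ p ∈ Pb, ((a p : ℝ) + 1)) ≤ ((2:ℝ))^(M:ℝ) := by
      have h0 : ((∏ p ∈ Pb, (a p + 1) : ℕ):ℝ) ≤ ((2^M : ℕ):ℝ) := by exact_mod_cast hbig_nat
      push_cast at h0
      exact h0.trans_eq (Real.rpow_natCast 2 M).symm
    refine hc1.trans ?_
    rw [Real.rpow_def_of_pos (by norm_num : (0:ℝ) < 2), Real.rpow_def_of_pos hk0R]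
    apply Real.exp_le_exp.mpr
    have h1 : Real.log 2 * (M:ℝ) ≤ 1 * (2*L/LL) :=
      mul_le_mul hlog2'.le hMle (Nat.cast_nonneg _) (by norm_num)
    have h2 : 2*L/LL ≤ 18*L/LL :=
      div_le_div_of_nonneg_right (by linarith) hLLpos.le
    have h3 : L * (18/LL) = 18*L/LL := by ring
    rw [← hLdef, h3]
    linarith
  -- COMBINE
  have hsmall : ∏ p ∈ Ps, ((a p : ℝ) + 1) ≤ (k:ℝ) ^ ((32:ℝ)/LL) :=
    hsmall1.trans (hsmall2.trans hsmall3)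
  have hbignn : (0:ℝ) ≤ ∏ p ∈ Pb, ((a p : ℝ) + 1) :=
    Finset.prod_nonneg (fun i _ => by positivity)
  calc (k.divisors.card : ℝ) = ∏ p ∈ P, ((a p : ℝ) + 1) := hcard
    _ = (∏ p ∈ Ps, ((a p : ℝ) + 1)) * ∏ p ∈ Pb, ((a p : ℝ) + 1) := hsplit
    _ ≤ ((k:ℝ) ^ ((32:ℝ)/LL)) * ((k:ℝ) ^ ((18:ℝ)/LL)) :=
        mul_le_mul hsmall hbig hbignn (by positivity)
    _ = (k:ℝ) ^ ((32:ℝ)/LL + (18:ℝ)/LL) := (Real.rpow_add hk0R _ _).symm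
    _ = (k:ℝ) ^ ((50:ℝ)/LL) := by rw [← add_div]; norm_num

/-- The number of positive integer pairs `(x, y)` with `x² + 3y² = k` is at most
`k ^ (C / log log k)` for every `k ≥ 16` coprime to `6`. -/
theorem lattice_points_ellipse_three :
    ∃ C : ℝ, 0 < C ∧ ∀ k : ℕ, 16 ≤ k → Nat.Coprime k 6 →
      ({p : ℕ × ℕ | 0 < p.1 ∧ 0 < p.2 ∧ p.1 ^ 2 + 3 * p.2 ^ 2 = k}.ncard : ℝ) ≤
        (k : ℝ) ^ (C / Real.log (Real.log k)) := by
  refine ⟨100, by norm_num, ?_⟩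
  intro k hk h6
  have hk0 : 0 < k := by omega
  have hk0R : (0:ℝ) < k := by exact_mod_cast hk0
  have hset : {p : ℕ × ℕ | 0 < p.1 ∧ 0 < p.2 ∧ p.1 ^ 2 + 3 * p.2 ^ 2 = k} = ↑(SF k) := by
    ext ⟨x, y⟩
    simp only [Set.mem_setOf_eq, Finset.mem_coe, mem_SF]
  rw [hset, Set.ncard_coe_finset]
  have h1 := SF_card_le k hk0 h6
  have h2 := two_pow_omega_le k hk0.ne'
  have h3 : (SF k).card ≤ k.divisors.card ^ 2 := by
    calc (SF k).card ≤ k.divisors.card * 2 ^ k.primeFactors.card := h1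
      _ ≤ k.divisors.card * k.divisors.card := Nat.mul_le_mul_left _ h2
      _ = k.divisors.card ^ 2 := (sq _).symm
  have hd := divisor_bound k hk
  calc ((SF k).card : ℝ) ≤ ((k.divisors.card : ℝ)) ^ 2 := by exact_mod_cast h3
    _ ≤ ((k:ℝ) ^ ((50:ℝ) / Real.log (Real.log k))) ^ 2 := by
        apply pow_le_pow_left₀ (by positivity) hd
    _ = (k:ℝ) ^ ((100:ℝ) / Real.log (Real.log k)) := by
        rw [sq, ← Real.rpow_add hk0R, ← add_div]
        norm_num
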